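/- Consider words over the alphabet {A, B, C, D}. Define a one-step rewriting relation → by: u(AB)w → uw and u(CD)w → uw for any words u, w. Let φ be the letter map A ↦ B, C ↦ D. Then for all u ∈ {A,C}* and v ∈ {B,D}*, the word uv rewrites in finitely many steps to the empty word if and only if v is the reversal of the letterwise image φ(u). -/

import Mathlib

inductive Sym3 : Type
  | A : Sym3
  | B : Sym3
  | C : Sym3
  | D : Sym3

open Sym3

/-- One-step rewriting with deletion rules `AB → λ` and `CD → λ` at any position. -/
inductive Step3 : List Sym3 → List Sym3 → Prop
  | ab (u w : List Sym3) : Step3 (u ++ [A, B] ++ w) (u ++ w)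
  | cd (u w : List Sym3) : Step3 (u ++ [C, D] ++ w) (u ++ w)

/-- The letter map `A ↦ B`, `C ↦ D` (identity elsewhere). -/
def phi3 : Sym3 → Sym3
  | A => B
  | C => D
  | s => s

lemma step3_ctx (l r x y : List Sym3) (h : Step3 x y) :
    Step3 (l ++ x ++ r) (l ++ y ++ r) := by
  cases h with
  | ab p q =>
    have e1 : l ++ (p ++ [A, B] ++ q) ++ r = (l ++ p) ++ [A, B] ++ (q ++ r) := by simp
    have e2 : l ++ (p ++ q) ++ r = (l ++ p) ++ (q ++ r) := by simp
    rw [e1, e2]; exact Step3.ab _ _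
  | cd p q =>
    have e1 : l ++ (p ++ [C, D] ++ q) ++ r = (l ++ p) ++ [C, D] ++ (q ++ r) := by simp
    have e2 : l ++ (p ++ q) ++ r = (l ++ p) ++ (q ++ r) := by simp
    rw [e1, e2]; exact Step3.cd _ _

lemma rtg_ctx (l r x y : List Sym3) (h : Relation.ReflTransGen Step3 x y) :
    Relation.ReflTransGen Step3 (l ++ x ++ r) (l ++ y ++ r) :=
  h.lift (fun z => l ++ z ++ r) (fun _ _ hs => step3_ctx l r _ _ hs)

lemma bwd3 (u : List Sym3) (hu : ∀ a ∈ u, a = A ∨ a = C) :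
    Relation.ReflTransGen Step3 (u ++ (u.map phi3).reverse) [] := by
  induction u with
  | nil => simpa using (Relation.ReflTransGen.refl (r := Step3) (a := []))
  | cons a u ih =>
    have ha := hu a List.mem_cons_self
    have ih' := ih (fun b hb => hu b (List.mem_cons_of_mem a hb))
    have e : (a :: u) ++ ((a :: u).map phi3).reverse
        = [a] ++ (u ++ (u.map phi3).reverse) ++ [phi3 a] := by simp
    rw [e]
    have h1 : Relation.ReflTransGen Step3 ([a] ++ (u ++ (u.map phi3).reverse) ++ [phi3 a])
        ([a] ++ [] ++ [phi3 a]) := rtg_ctx _ _ _ _ ih'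
    refine h1.trans ?_
    have hstep : Step3 ([a] ++ [] ++ [phi3 a]) ([] ++ []) := by
      rcases ha with rfl | rfl
      · exact Step3.ab [] []
      · exact Step3.cd [] []
    exact Relation.ReflTransGen.single (by simpa using hstep)

lemma split3 (u v p q : List Sym3) (x y : Sym3)
    (hu : ∀ a ∈ u, a = A ∨ a = C) (hv : ∀ a ∈ v, a = B ∨ a = D)
    (hx : x = A ∨ x = C) (hy : y = B ∨ y = D)
    (h : u ++ v = p ++ [x, y] ++ q) : u = p ++ [x] ∧ v = y :: q := by
  have h1 : p.length < u.length := by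
    by_contra hle
    push_neg at hle
    have hup : u <+: p := by
      refine List.prefix_of_prefix_length_le ⟨v, h⟩ ?_ hle
      exact ⟨[x, y] ++ q, by simp⟩
    obtain ⟨p', rfl⟩ := hup
    have hcancel : v = p' ++ [x, y] ++ q := by
      apply List.append_cancel_left (as := u)
      simpa [List.append_assoc] using h
    have hxv : x ∈ v := by rw [hcancel]; simp
    rcases hv x hxv with h1 | h1 <;> rcases hx with rfl | rfl <;> simp_all
  have h2 : ¬ (p.length + 1 < u.length) := by
    intro hlt
    have hpu : p ++ [x, y] <+: u := by
      refine List.prefix_of_prefix_length_le ⟨q, by simpa [List.append_assoc] using h.symm⟩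
        ⟨v, rfl⟩ ?_
      simp; omega
    have hyu : y ∈ u := hpu.subset (by simp)
    rcases hu y hyu with h1 | h1 <;> rcases hy with rfl | rfl <;> simp_all
  have hlen : u.length = p.length + 1 := by omega
  have h' : u ++ v = (p ++ [x]) ++ (y :: q) := by simpa [List.append_assoc] using h
  exact List.append_inj h' (by simp [hlen])

lemma step3_inv {s t : List Sym3} (h : Step3 s t) :
    ∃ p q x y, ((x = A ∧ y = B) ∨ (x = C ∧ y = D)) ∧ s = p ++ [x, y] ++ q ∧ t = p ++ q := by
  cases h with
  | ab p q => exact ⟨p, q, A, B, Or.inl ⟨rfl, rfl⟩, rfl, rfl⟩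
  | cd p q => exact ⟨p, q, C, D, Or.inr ⟨rfl, rfl⟩, rfl, rfl⟩

lemma fwd3 : ∀ (u v : List Sym3), (∀ a ∈ u, a = A ∨ a = C) → (∀ a ∈ v, a = B ∨ a = D) →
    Relation.ReflTransGen Step3 (u ++ v) [] → v = (u.map phi3).reverse := by
  intro u
  induction u using List.reverseRecOn with
  | nil =>
    intro v _ hv h
    simp only [List.nil_append] at h
    rcases (Relation.ReflTransGen.cases_head h) with rfl | ⟨w, hs, _⟩
    · simp
    · exfalso
      obtain ⟨p, q, x, y, hxy, hseq, _⟩ := step3_inv hs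
      have hxv : x ∈ v := by rw [hseq]; simp
      rcases hv x hxv with h1 | h1 <;> rcases hxy with ⟨rfl, rfl⟩ | ⟨rfl, rfl⟩ <;> simp_all
  | append_singleton u a ih =>
    intro v hu hv h
    have hword : (u ++ [a]) ++ v ≠ [] := by simp
    rcases Relation.ReflTransGen.cases_head h with heq | ⟨w, hs, hrest⟩
    · exact absurd heq hword
    · have hu' : ∀ b ∈ u, b = A ∨ b = C := fun b hb => hu b (by simp [hb])
      obtain ⟨p, q, x, y, hxy, hseq, rfl⟩ := step3_inv hs
      have hx : x = A ∨ x = C := by rcases hxy with ⟨rfl, _⟩ | ⟨rfl, _⟩ <;> simp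
      have hy : y = B ∨ y = D := by rcases hxy with ⟨_, rfl⟩ | ⟨_, rfl⟩ <;> simp
      obtain ⟨he1, he2⟩ := split3 (u ++ [a]) v p q x y hu hv hx hy hseq
      have hpa : u = p ∧ a = x := by
        have := List.append_inj he1 (by
          have := congrArg List.length he1
          simpa using this)
        simpa using this
      obtain ⟨rfl, rfl⟩ := hpa
      have hq : ∀ b ∈ q, b = B ∨ b = D := by
        intro b hb; exact hv b (by simp [he2, hb])
      have hih := ih q hu' hq hrest
      rcases hxy with ⟨rfl, rfl⟩ | ⟨rfl, rfl⟩ <;> rw [he2, hih] <;> simp [phi3]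

theorem stmt3 (u v : List Sym3)
    (hu : ∀ a ∈ u, a = A ∨ a = C) (hv : ∀ a ∈ v, a = B ∨ a = D) :
    Relation.ReflTransGen Step3 (u ++ v) [] ↔ v = (u.map phi3).reverse := by
  constructor
  · exact fwd3 u v hu hv
  · rintro rfl
    exact bwd3 u hu
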